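/- Let S₁, S₂, S₃ be symmetric positive definite n×n matrices, S = S₁+S₂+S₃, and define the deluxe edge average ū = S^{-1}(S₁u₁ + S₂u₂ + S₃u₃) for vectors u₁,u₂,u₃ ∈ ℝⁿ. Then (u₁ − ū)ᵀ S₁ (u₁ − ū) ≤ 3(u₁ᵀS₁u₁ + u₂ᵀS₂u₂ + u₃ᵀS₃u₃). -/

import Mathlib

open Matrix

private lemma dot_symm {n : ℕ} (A : Matrix (Fin n) (Fin n) ℝ) (hA : A.IsHermitian)
    (x y : Fin n → ℝ) : x ⬝ᵥ A *ᵥ y = y ⬝ᵥ A *ᵥ x := by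
  have ht : Aᵀ = A := by simpa [Matrix.conjTranspose_eq_transpose_of_trivial] using hA.eq
  rw [dotProduct_mulVec, ← mulVec_transpose, ht, dotProduct_comm]

private lemma quad_expand {n : ℕ} (A : Matrix (Fin n) (Fin n) ℝ) (hA : A.IsHermitian)
    (x z : Fin n → ℝ) :
    (x - z) ⬝ᵥ A *ᵥ (x - z) = x ⬝ᵥ A *ᵥ x - 2 * (z ⬝ᵥ A *ᵥ x) + z ⬝ᵥ A *ᵥ z := by
  rw [mulVec_sub, dotProduct_sub, sub_dotProduct, sub_dotProduct, dot_symm A hA x z]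
  ring

/-- Deluxe edge-average bound for three subdomains sharing an edge. -/
theorem deluxe_edge_average_bound (n : ℕ)
    (S1 S2 S3 : Matrix (Fin n) (Fin n) ℝ)
    (h1 : S1.PosDef) (h2 : S2.PosDef) (h3 : S3.PosDef)
    (u1 u2 u3 : Fin n → ℝ) :
    let S := S1 + S2 + S3
    let ubar := S⁻¹ *ᵥ (S1 *ᵥ u1 + S2 *ᵥ u2 + S3 *ᵥ u3)
    (u1 - ubar) ⬝ᵥ S1 *ᵥ (u1 - ubar)
      ≤ 3 * (u1 ⬝ᵥ S1 *ᵥ u1 + u2 ⬝ᵥ S2 *ᵥ u2 + u3 ⬝ᵥ S3 *ᵥ u3) := by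
  intro S ubar
  have hS : S.PosDef := (h1.add_posSemidef h2.posSemidef).add_posSemidef h3.posSemidef
  have hdet : IsUnit S.det := isUnit_iff_ne_zero.mpr hS.det_pos.ne'
  have hub : S *ᵥ ubar = S1 *ᵥ u1 + S2 *ᵥ u2 + S3 *ᵥ u3 := by
    show S *ᵥ (S⁻¹ *ᵥ _) = _
    rw [mulVec_mulVec, Matrix.mul_nonsing_inv _ hdet, one_mulVec]
  set p1 := u1 ⬝ᵥ S1 *ᵥ u1
  set p2 := u2 ⬝ᵥ S2 *ᵥ u2
  set p3 := u3 ⬝ᵥ S3 *ᵥ u3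
  set q1 := ubar ⬝ᵥ S1 *ᵥ u1
  set q2 := ubar ⬝ᵥ S2 *ᵥ u2
  set q3 := ubar ⬝ᵥ S3 *ᵥ u3
  set r1 := ubar ⬝ᵥ S1 *ᵥ ubar
  set r2 := ubar ⬝ᵥ S2 *ᵥ ubar
  set r3 := ubar ⬝ᵥ S3 *ᵥ ubar
  have hq : r1 + r2 + r3 = q1 + q2 + q3 := by
    have h1 : ubar ⬝ᵥ S *ᵥ ubar = r1 + r2 + r3 := by
      show ubar ⬝ᵥ (S1 + S2 + S3) *ᵥ ubar = _
      simp [add_mulVec, dotProduct_add]; rfl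
    have h2 : ubar ⬝ᵥ S *ᵥ ubar = q1 + q2 + q3 := by
      rw [hub]; simp [dotProduct_add]; rfl
    linarith
  have e1 := quad_expand S1 h1.1 u1 ubar
  have e2 := quad_expand S2 h2.1 u2 ubar
  have e3 := quad_expand S3 h3.1 u3 ubar
  have n1 := h1.posSemidef.dotProduct_mulVec_nonneg (u1 - ubar)
  have n2 := h2.posSemidef.dotProduct_mulVec_nonneg (u2 - ubar)
  have n3 := h3.posSemidef.dotProduct_mulVec_nonneg (u3 - ubar)
  have np1 := h1.posSemidef.dotProduct_mulVec_nonneg u1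
  have np2 := h2.posSemidef.dotProduct_mulVec_nonneg u2
  have np3 := h3.posSemidef.dotProduct_mulVec_nonneg u3
  have nr1 := h1.posSemidef.dotProduct_mulVec_nonneg ubar
  have nr2 := h2.posSemidef.dotProduct_mulVec_nonneg ubar
  have nr3 := h3.posSemidef.dotProduct_mulVec_nonneg ubar
  simp only [star_trivial] at n1 n2 n3 np1 np2 np3 nr1 nr2 nr3
  rw [e1] at n1 ⊢; rw [e2] at n2; rw [e3] at n3
  linarith
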